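/- For a continuous function g_0 on a compact set D, the directional (Hadamard) derivative of the sup-norm at g_0 in direction h is D_{g_0}(h) = \max\{\max_{d\in E^+} h(d), \max_{d\in E^-} (-h(d))\}, in the sense that \lim_{t\downarrow 0} (\|g_0 + t h_t\|_\infty - \|g_0\|_\infty)/t = D_{g_0}(h) whenever h_t \to h uniformly and all functions are continuous, where E^\pm = \{d \in D : g_0(d) = \pm\|g_0\|_\infty\} and the maximum over an empty set is taken as -\infty. -/
import Mathlib

open Filter Set

/-- Directional Hadamard derivative of the sup-norm at g₀ in direction h:
(‖g₀ + t·hₜ‖ - ‖g₀‖)/t → max{max_{E⁺} h, max_{E⁻}(-h)}, where the two maxima are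
combined as the supremum of the union of the corresponding image sets. -/
theorem stmt5 {D : Type*} [MetricSpace D] [CompactSpace D] [Nonempty D]
    (g0 h : C(D, ℝ)) (hg0 : 0 < ‖g0‖) (ht : ℝ → C(D, ℝ))
    (hconv : Filter.Tendsto (fun t => ‖ht t - h‖) (nhdsWithin 0 (Set.Ioi 0)) (nhds 0)) :
    Filter.Tendsto (fun t => (‖g0 + t • ht t‖ - ‖g0‖) / t)
      (nhdsWithin 0 (Set.Ioi 0))
      (nhds (sSup ((fun d => h d) '' {d | g0 d = ‖g0‖} ∪
        (fun d => -h d) '' {d | g0 d = -‖g0‖}))) := by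
  set M := ‖g0‖ with hM
  set S : Set ℝ := (fun d => h d) '' {d | g0 d = M} ∪ (fun d => -h d) '' {d | g0 d = -M}
    with hSdef
  set L := sSup S with hLdef
  have hSbdd : BddAbove S := by
    refine ⟨‖h‖, ?_⟩
    rintro x (⟨d, -, rfl⟩ | ⟨d, -, rfl⟩)
    · exact (le_abs_self _).trans (h.norm_coe_le_norm d)
    · exact (neg_le_abs _).trans (h.norm_coe_le_norm d)
  obtain ⟨d0, -, hd0'⟩ := isCompact_univ.exists_isMaxOn univ_nonempty
      (g0.continuous.abs.continuousOn : ContinuousOn (fun d => |g0 d|) univ)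
  have hd0 : ∀ x, |g0 x| ≤ |g0 d0| := fun x => hd0' (mem_univ x)
  have hd0M : |g0 d0| = M := by
    refine le_antisymm (g0.norm_coe_le_norm d0) ?_
    rw [hM]
    rw [ContinuousMap.norm_le_of_nonempty]
    exact fun x => by rw [Real.norm_eq_abs]; exact hd0 x
  have hSne : S.Nonempty := by
    rcases (abs_eq (le_of_lt hg0)).mp hd0M with h1 | h1
    · exact ⟨h d0, Or.inl ⟨d0, h1, rfl⟩⟩
    · exact ⟨-h d0, Or.inr ⟨d0, h1, rfl⟩⟩
  set c : ℝ := ‖h‖ + |L| + 1 with hc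
  have hcpos : 0 < c := by positivity
  have hbd : ∀ d, |h d| ≤ ‖h‖ := fun d => h.norm_coe_le_norm d
  -- key upper bound with direction h
  have key : ∀ ε > 0, ∃ t0 > 0, ∀ t ∈ Ioo (0:ℝ) t0, ‖g0 + t • h‖ ≤ M + t * (L + ε) := by
    intro ε hε
    set A : Set D := {d | 0 ≤ g0 d ∧ L + ε ≤ h d} ∪ {d | g0 d ≤ 0 ∧ L + ε ≤ -h d} with hA
    have hAclosed : IsClosed A := by
      refine IsClosed.union ?_ ?_
      · exact (isClosed_le continuous_const g0.continuous).inter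
          (isClosed_le continuous_const h.continuous)
      · exact (isClosed_le g0.continuous continuous_const).inter
          (isClosed_le continuous_const h.continuous.neg)
    have hAsmall : ∃ δ > 0, ∀ d ∈ A, |g0 d| ≤ M - δ := by
      rcases eq_empty_or_nonempty A with hAe | hAne
      · exact ⟨M, hg0, by simp [hAe]⟩
      · obtain ⟨dA, hdA, hdAmax⟩ := hAclosed.isCompact.exists_isMaxOn hAne
          (g0.continuous.abs.continuousOn : ContinuousOn (fun d => |g0 d|) A)
        have hlt : |g0 dA| < M := by
          rcases lt_or_eq_of_le (g0.norm_coe_le_norm dA) with hlt | heq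
          · exact hlt
          · exfalso
            rcases (abs_eq (le_of_lt hg0)).mp heq with h1 | h1
            · rcases hdA with ⟨-, h3⟩ | ⟨h2, -⟩
              · have : h dA ≤ L := le_csSup hSbdd (Or.inl ⟨dA, h1, rfl⟩)
                linarith
              · linarith
            · rcases hdA with ⟨h2, -⟩ | ⟨-, h3⟩
              · linarith
              · have : -h dA ≤ L := le_csSup hSbdd (Or.inr ⟨dA, h1, rfl⟩)
                linarith
        exact ⟨M - |g0 dA|, by linarith, fun d hd => by
          have : |g0 d| ≤ |g0 dA| := hdAmax hd; linarith⟩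
    obtain ⟨δ, hδpos, hδ⟩ := hAsmall
    refine ⟨min (δ / c) (M / c), lt_min (div_pos hδpos hcpos) (div_pos hg0 hcpos), ?_⟩
    rintro t ⟨htpos, htlt⟩
    have htc1 : t * c < δ := by
      have := lt_of_lt_of_le htlt (min_le_left _ _)
      calc t * c < (δ / c) * c := by exact mul_lt_mul_of_pos_right this hcpos
        _ = δ := by field_simp
    have htc2 : t * c < M := by
      have := lt_of_lt_of_le htlt (min_le_right _ _)
      calc t * c < (M / c) * c := by exact mul_lt_mul_of_pos_right this hcpos
        _ = M := by field_simp
    have hce : t * c = t * ‖h‖ + t * |L| + t := by rw [hc]; ring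
    have htL : -(t * |L|) ≤ t * L := by
      have := mul_le_mul_of_nonneg_left (neg_abs_le L) (le_of_lt htpos)
      linarith [this]
    have htε : 0 < t * ε := mul_pos htpos hε
    rw [ContinuousMap.norm_le_of_nonempty]
    intro d
    have happ : (g0 + t • h) d = g0 d + t * h d := by
      simp [ContinuousMap.smul_apply, smul_eq_mul]
    rw [Real.norm_eq_abs, happ, abs_le]
    have hhd1 : t * h d ≤ t * ‖h‖ :=
      mul_le_mul_of_nonneg_left ((le_abs_self _).trans (hbd d)) (le_of_lt htpos)
    have hhd2 : -(t * ‖h‖) ≤ t * h d := by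
      have h3 : -‖h‖ ≤ h d := (abs_le.mp (hbd d)).1
      have := mul_le_mul_of_nonneg_left h3 (le_of_lt htpos)
      linarith
    by_cases hdA : d ∈ A
    · have hg := hδ d hdA
      have hga := abs_le.mp hg
      constructor <;> linarith
    · simp only [hA, mem_union, mem_setOf_eq, not_or, not_and, not_le] at hdA
      obtain ⟨hd1, hd2⟩ := hdA
      rcases le_or_gt 0 (g0 d) with hsgn | hsgn
      · have hhd : h d < L + ε := hd1 hsgn
        have hg1 : g0 d ≤ M := (le_abs_self _).trans (g0.norm_coe_le_norm d)
        have hmul : t * h d ≤ t * (L + ε) :=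
          mul_le_mul_of_nonneg_left (le_of_lt hhd) (le_of_lt htpos)
        constructor <;> linarith
      · have hhd : -h d < L + ε := hd2 (le_of_lt hsgn)
        have hg1 : -(g0 d) ≤ M := (neg_le_abs _).trans (g0.norm_coe_le_norm d)
        have hmul : t * (-h d) ≤ t * (L + ε) :=
          mul_le_mul_of_nonneg_left (le_of_lt hhd) (le_of_lt htpos)
        constructor <;> nlinarith
  -- now the squeeze
  rw [Metric.tendsto_nhds]
  intro ε hε
  obtain ⟨t0, ht0pos, ht0⟩ := key (ε/2) (by linarith)
  have h1 : ∀ᶠ t in nhdsWithin (0:ℝ) (Ioi 0), ‖ht t - h‖ < ε/2 :=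
    hconv.eventually_lt_const (by linarith)
  have h2 : ∀ᶠ t in nhdsWithin (0:ℝ) (Ioi 0), t ∈ Ioo (0:ℝ) t0 :=
    Ioo_mem_nhdsGT_of_mem ⟨le_refl 0, ht0pos⟩
  filter_upwards [h1, h2] with t hn htIoo
  have htpos : 0 < t := htIoo.1
  set N := ‖g0 + t • ht t‖ with hN
  have hnorm : N ≤ ‖g0 + t • h‖ + t * ‖ht t - h‖ := by
    have hdecomp : g0 + t • ht t = (g0 + t • h) + t • (ht t - h) := by
      rw [smul_sub]; abel
    rw [hN, hdecomp]
    refine (norm_add_le _ _).trans ?_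
    have hs : ‖t • (ht t - h)‖ = |t| * ‖ht t - h‖ := by
      have := norm_smul (α := ℝ) (β := C(D, ℝ)) t (ht t - h)
      rwa [Real.norm_eq_abs] at this
    rw [hs, abs_of_pos htpos]
  have upper := ht0 t htIoo
  have lower : L ≤ (N - M)/t + ‖ht t - h‖ := by
    refine csSup_le hSne ?_
    rintro s (⟨d, hd, rfl⟩ | ⟨d, hd, rfl⟩)
    · have hb1 : g0 d + t * ht t d ≤ N := by
        have := (g0 + t • ht t).norm_coe_le_norm d
        simp only [ContinuousMap.add_apply, ContinuousMap.smul_apply, smul_eq_mul,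
          Real.norm_eq_abs] at this
        exact (le_abs_self _).trans this
      have hb2 : |ht t d - h d| ≤ ‖ht t - h‖ := by
        have := (ht t - h).norm_coe_le_norm d
        simpa [Real.norm_eq_abs] using this
      have hb3 := (abs_le.mp hb2).1
      have hmul : t * (h d - ‖ht t - h‖) ≤ t * ht t d :=
        mul_le_mul_of_nonneg_left (by linarith) (le_of_lt htpos)
      rw [mem_setOf_eq] at hd
      rw [← sub_le_iff_le_add, le_div_iff₀ htpos]
      nlinarith
    · have hb1 : -(g0 d + t * ht t d) ≤ N := by
        have := (g0 + t • ht t).norm_coe_le_norm d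
        simp only [ContinuousMap.add_apply, ContinuousMap.smul_apply, smul_eq_mul,
          Real.norm_eq_abs] at this
        exact (neg_le_abs _).trans this
      have hb2 : |ht t d - h d| ≤ ‖ht t - h‖ := by
        have := (ht t - h).norm_coe_le_norm d
        simpa [Real.norm_eq_abs] using this
      have hb3 := (abs_le.mp hb2).2
      have hmul : t * (-h d - ‖ht t - h‖) ≤ t * (-(ht t d)) :=
        mul_le_mul_of_nonneg_left (by linarith) (le_of_lt htpos)
      rw [mul_neg] at hmul
      rw [mem_setOf_eq] at hd
      rw [← sub_le_iff_le_add, le_div_iff₀ htpos]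
      show (-h d - ‖ht t - h‖) * t ≤ N - M
      nlinarith [hmul, hb1]
  rw [Real.dist_eq, abs_lt]
  have hnn : 0 ≤ ‖ht t - h‖ := norm_nonneg _
  constructor
  · have : L - ‖ht t - h‖ ≤ (N - M)/t := by linarith
    linarith
  · have hmul : t * ‖ht t - h‖ < t * (ε/2) := mul_lt_mul_of_pos_left hn htpos
    have hNlt : N - M < t * (L + ε) := by nlinarith
    have : (N - M)/t < L + ε := (div_lt_iff₀ htpos).mpr (by linarith)
    linarith
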